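/- (Stochastic Armijo condition.) Let f : ℝⁿ → ℝ be twice continuously differentiable with its Hessian uniformly bounded in operator norm by a constant L > 0 on ℝⁿ. Fix x ∈ ℝⁿ with ∇f(x) ≠ 0 and a deterministic symmetric positive definite n×n matrix B. Let v be an ℝⁿ-valued square-integrable random vector with E[v] = 0 and covariance E[v vᵀ] = R, where R is positive definite, and let e, e′ be integrable real random variables with E[e] = E[e′] = b. Define the noisy gradient g = ∇f(x) + v, the search direction p = −Bg, the noisy function values f̂(x) = f(x) + e and f̂(x + αp) = f(x + αp) + e′, and set γ = ∇f(x)ᵀ B ∇f(x) and β = Tr(BR). Then for every constant c with 0 < c < γ/(γ + β), there exists ᾱ > 0 such that for all α with 0 < α ≤ ᾱ, the Armijo condition holds in expectation: E[f̂(x + αp) − f̂(x) − c·α·gᵀp] ≤ 0. -/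

import Mathlib

set_option maxHeartbeats 1000000
open Matrix MeasureTheory

lemma myIntegrableMul {Ω : Type*} [MeasurableSpace Ω] {μ : Measure Ω} {f g : Ω → ℝ}
    (hf : MemLp f 2 μ) (hg : MemLp g 2 μ) :
    Integrable (fun ω => f ω * g ω) μ := by
  have h1 := (hf.add hg).integrable_sq
  have h2 := hf.integrable_sq
  have h3 := hg.integrable_sq
  have key : (fun ω => f ω * g ω)
      = fun ω => (1/2 : ℝ) * (((f + g) ω) ^ 2 - f ω ^ 2 - g ω ^ 2) := by
    funext ω; simp only [Pi.add_apply]; ring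
  rw [key]
  exact (((h1.sub h2).sub h3).const_mul _)

lemma myNormSq {n : ℕ} (u : Fin n → ℝ) : ‖u‖ ^ 2 ≤ ∑ i, u i ^ 2 := by
  have h0 : 0 ≤ ∑ i, u i ^ 2 := Finset.sum_nonneg fun i _ => sq_nonneg _
  have h1 : ‖u‖ ≤ Real.sqrt (∑ i, u i ^ 2) := by
    rw [pi_norm_le_iff_of_nonneg (Real.sqrt_nonneg _)]
    intro i
    rw [Real.norm_eq_abs, ← Real.sqrt_sq_eq_abs]
    exact Real.sqrt_le_sqrt (Finset.single_le_sum (fun j _ => sq_nonneg (u j)) (Finset.mem_univ i))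
  calc ‖u‖ ^ 2 ≤ Real.sqrt (∑ i, u i ^ 2) ^ 2 := pow_le_pow_left₀ (norm_nonneg u) h1 2
    _ = ∑ i, u i ^ 2 := Real.sq_sqrt h0

lemma myTaylor {n : ℕ} (f : (Fin n → ℝ) → ℝ) (hf : ContDiff ℝ 2 f)
    (L : ℝ) (hL : 0 < L) (hHess : ∀ z, ‖iteratedFDeriv ℝ 2 f z‖ ≤ L)
    (x d : Fin n → ℝ) :
    |f (x + d) - f x - fderiv ℝ f x d| ≤ L * ‖d‖ ^ 2 := by
  have hdf : Differentiable ℝ f := hf.differentiable (by norm_num)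
  have hfd2 : ContDiff ℝ 1 (fderiv ℝ f) := hf.fderiv_right (by norm_num)
  have hd2 : Differentiable ℝ (fderiv ℝ f) := hfd2.differentiable (by norm_num)
  have hbound2 : ∀ z, ‖fderiv ℝ (fderiv ℝ f) z‖ ≤ L := by
    intro z
    refine ContinuousLinearMap.opNorm_le_bound _ hL.le fun u => ?_
    refine ContinuousLinearMap.opNorm_le_bound _ (by positivity) fun w => ?_
    have h2 : iteratedFDeriv ℝ 2 f z ![u, w] = fderiv ℝ (fderiv ℝ f) z u w := by
      rw [iteratedFDeriv_two_apply]; simp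
    rw [← h2]
    calc ‖iteratedFDeriv ℝ 2 f z ![u, w]‖
        ≤ ‖iteratedFDeriv ℝ 2 f z‖ * ∏ i, ‖![u, w] i‖ :=
          ContinuousMultilinearMap.le_opNorm _ _
      _ = ‖iteratedFDeriv ℝ 2 f z‖ * (‖u‖ * ‖w‖) := by
          rw [Fin.prod_univ_two]; simp
      _ ≤ L * ‖u‖ * ‖w‖ := by
          rw [← mul_assoc]
          gcongr
          exact hHess z
  have hlip : LipschitzWith L.toNNReal (fderiv ℝ f) := by
    apply lipschitzWith_of_nnnorm_fderiv_le hd2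
    intro z
    rw [← NNReal.coe_le_coe, coe_nnnorm, Real.coe_toNNReal _ hL.le]
    exact hbound2 z
  have hb : ∀ z ∈ Metric.closedBall x ‖d‖, ‖fderiv ℝ f z - fderiv ℝ f x‖ ≤ L * ‖d‖ := by
    intro z hz
    have h1 := hlip.dist_le_mul z x
    rw [dist_eq_norm] at h1
    have h2 : dist z x ≤ ‖d‖ := Metric.mem_closedBall.mp hz
    calc ‖fderiv ℝ f z - fderiv ℝ f x‖ ≤ (L.toNNReal : ℝ) * dist z x := h1
      _ ≤ L * ‖d‖ := by
          rw [Real.coe_toNNReal _ hL.le]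
          exact mul_le_mul_of_nonneg_left h2 hL.le
  have key := Convex.norm_image_sub_le_of_norm_hasFDerivWithin_le'
      (f := f) (f' := fun z => fderiv ℝ f z) (φ := fderiv ℝ f x)
      (s := Metric.closedBall x ‖d‖) (C := L * ‖d‖)
      (fun z _ => (hdf z).hasFDerivAt.hasFDerivWithinAt) hb
      (convex_closedBall _ _)
      (Metric.mem_closedBall_self (norm_nonneg d))
      (y := x + d) (by simp [Metric.mem_closedBall, dist_eq_norm])
  have h3 : x + d - x = d := by abel
  rw [h3] at key
  rw [← Real.norm_eq_abs]
  calc ‖f (x + d) - f x - fderiv ℝ f x d‖ ≤ L * ‖d‖ * ‖d‖ := key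
    _ = L * ‖d‖ ^ 2 := by ring

/-- **Stochastic Armijo condition.** Let `f : ℝⁿ → ℝ` be twice continuously
differentiable with Hessian uniformly bounded in operator norm by `L > 0`.
Fix `x` with `∇f(x) ≠ 0` and a symmetric positive definite matrix `B`. Let `v`
be a square-integrable zero-mean random vector with positive definite
covariance `R`, and let `e, e'` be integrable real noises with common mean
`b`. With noisy gradient `g = ∇f(x) + v`, search direction `p = -B g`,
`γ = ∇f(x)ᵀ B ∇f(x)` and `β = Tr(B R)`, for every `0 < c < γ / (γ + β)` there
exists `ᾱ > 0` such that for all `0 < α ≤ ᾱ`,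
`E[f̂(x + α p) - f̂(x) - c α gᵀ p] ≤ 0`. -/
theorem stochastic_armijo_condition {Ω : Type*} [MeasurableSpace Ω]
    (μ : Measure Ω) [IsProbabilityMeasure μ] (n : ℕ)
    (f : (Fin n → ℝ) → ℝ) (hf : ContDiff ℝ 2 f)
    (L : ℝ) (hL : 0 < L) (hHess : ∀ z, ‖iteratedFDeriv ℝ 2 f z‖ ≤ L)
    (x : Fin n → ℝ)
    (grad : (Fin n → ℝ) → (Fin n → ℝ))
    (hgrad : ∀ y i, grad y i = fderiv ℝ f y (Pi.single i 1))
    (hgx : grad x ≠ 0)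
    (B R : Matrix (Fin n) (Fin n) ℝ) (hB : B.PosDef) (hR : R.PosDef)
    (v : Ω → Fin n → ℝ) (hsq : ∀ i, MemLp (fun ω => v ω i) 2 μ)
    (hmean : ∀ i, ∫ ω, v ω i ∂μ = 0)
    (hcov : ∀ i j, ∫ ω, v ω i * v ω j ∂μ = R i j)
    (e e' : Ω → ℝ) (he : Integrable e μ) (he' : Integrable e' μ)
    (b : ℝ) (hbe : ∫ ω, e ω ∂μ = b) (hbe' : ∫ ω, e' ω ∂μ = b)
    (γ β : ℝ) (hγ : γ = grad x ⬝ᵥ B.mulVec (grad x)) (hβ : β = (B * R).trace)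
    (c : ℝ) (hc0 : 0 < c) (hc1 : c < γ / (γ + β)) :
    ∃ αbar > 0, ∀ α : ℝ, 0 < α → α ≤ αbar →
      ∫ ω, (f (x + α • (-(B.mulVec (grad x + v ω)))) + e' ω)
          - (f x + e ω)
          - c * α * ((grad x + v ω) ⬝ᵥ (-(B.mulVec (grad x + v ω)))) ∂μ ≤ 0 := by
  set G := grad x with hGdef
  -- the derivative identity
  have hfd_eq : ∀ u : Fin n → ℝ, fderiv ℝ f x u = G ⬝ᵥ u := by
    intro u
    have hu : u = ∑ i, u i • (Pi.single i 1 : Fin n → ℝ) := by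
      ext j; simp [Pi.single_apply]
    conv_lhs => rw [hu]
    rw [map_sum]
    simp only [ContinuousLinearMap.map_smul, smul_eq_mul]
    rw [dotProduct]
    refine Finset.sum_congr rfl fun i _ => ?_
    rw [← hgrad x i, hGdef]
    ring
  have htaylor : ∀ d : Fin n → ℝ, |f (x + d) - f x - G ⬝ᵥ d| ≤ L * ‖d‖ ^ 2 := by
    intro d
    have := myTaylor f hf L hL hHess x d
    rwa [hfd_eq d] at this
  -- random vector definitions
  set P : Ω → Fin n → ℝ := fun ω => B.mulVec (G + v ω) with hPdef
  have hPswap : ∀ ω, B.mulVec (G + v ω) = P ω := fun _ => rfl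
  set S : Ω → ℝ := fun ω => G ⬝ᵥ P ω with hSdef
  set Q : Ω → ℝ := fun ω => (G + v ω) ⬝ᵥ P ω with hQdef
  set N : Ω → ℝ := fun ω => ∑ i, P ω i ^ 2 with hNdef
  have hGv : ∀ i, MemLp (fun ω => G i + v ω i) 2 μ :=
    fun i => (memLp_const (G i)).add (hsq i)
  have hPm : ∀ i, MemLp (fun ω => P ω i) 2 μ := by
    intro i
    have h1 : (fun ω => P ω i) = fun ω => ∑ j, B i j * (G j + v ω j) := by
      funext ω
      simp [hPdef, Matrix.mulVec, dotProduct]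
    rw [h1]
    exact memLp_finset_sum _ fun j _ => ((hGv j).const_mul (B i j))
  -- integrability
  have hSint : Integrable S μ := by
    have h1 : S = fun ω => ∑ i, G i * P ω i := by
      funext ω; simp [hSdef, dotProduct]
    rw [h1]
    exact integrable_finset_sum _ fun i _ => ((hPm i).integrable one_le_two).const_mul (G i)
  have hQint : Integrable Q μ := by
    have h1 : Q = fun ω => ∑ i, (G i + v ω i) * P ω i := by
      funext ω; simp [hQdef, dotProduct]
    rw [h1]
    exact integrable_finset_sum _ fun i _ => myIntegrableMul (hGv i) (hPm i)
  have hNint : Integrable N μ := by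
    have h1 : N = fun ω => ∑ i, P ω i ^ 2 := rfl
    rw [h1]
    exact integrable_finset_sum _ fun i _ => (hPm i).integrable_sq
  -- integral values
  have hint1 : ∀ j : Fin n, ∫ ω, (G j + v ω j) ∂μ = G j := by
    intro j
    rw [integral_add (integrable_const _) ((hsq j).integrable one_le_two),
      integral_const, hmean j]
    simp
  have hSval : ∫ ω, S ω ∂μ = γ := by
    have h1 : S = fun ω => ∑ i, ∑ j, (G i * B i j) * (G j + v ω j) := by
      funext ω
      simp only [hSdef, hPdef, dotProduct, Matrix.mulVec, Pi.add_apply, Finset.mul_sum]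
      exact Finset.sum_congr rfl fun i _ => Finset.sum_congr rfl fun j _ => by ring
    have hin : ∀ i : Fin n, Integrable (fun ω => ∑ j, (G i * B i j) * (G j + v ω j)) μ :=
      fun i => integrable_finset_sum _ fun j _ =>
        ((hGv j).integrable one_le_two).const_mul _
    rw [h1, integral_finset_sum _ fun i _ => hin i]
    have h2 : ∀ i : Fin n, ∫ ω, (∑ j, (G i * B i j) * (G j + v ω j)) ∂μ
        = ∑ j, (G i * B i j) * G j := by
      intro i
      rw [integral_finset_sum _ fun j _ => ((hGv j).integrable one_le_two).const_mul _]
      exact Finset.sum_congr rfl fun j _ => by rw [integral_const_mul, hint1 j]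
    rw [Finset.sum_congr rfl fun i _ => h2 i, hγ]
    simp only [dotProduct, Matrix.mulVec, Finset.mul_sum]
    exact Finset.sum_congr rfl fun i _ => Finset.sum_congr rfl fun j _ => by ring
  have hprod : ∀ i j, ∫ ω, (G i + v ω i) * (G j + v ω j) ∂μ = G i * G j + R i j := by
    intro i j
    have hexp : (fun ω => (G i + v ω i) * (G j + v ω j))
        = fun ω => G i * G j + (G i * v ω j + (v ω i * G j + v ω i * v ω j)) := by
      funext ω; ring
    have i1 : Integrable (fun ω => G i * v ω j) μ :=
      ((hsq j).integrable one_le_two).const_mul _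
    have i2 : Integrable (fun ω => v ω i * G j) μ :=
      ((hsq i).integrable one_le_two).mul_const _
    have i3 : Integrable (fun ω => v ω i * v ω j) μ := myIntegrableMul (hsq i) (hsq j)
    have i23 : Integrable (fun ω => v ω i * G j + v ω i * v ω j) μ := i2.add i3
    have i123 : Integrable (fun ω => G i * v ω j + (v ω i * G j + v ω i * v ω j)) μ :=
      i1.add i23
    rw [hexp, integral_add (integrable_const _) i123,
      integral_add i1 i23, integral_add i2 i3, integral_const,
      integral_const_mul, integral_mul_const, hmean i, hmean j, hcov i j]
    simp
  have hβeq : β = ∑ i, ∑ j, B i j * R i j := by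
    rw [hβ]
    have h1 : (B * R).trace = ∑ i, ∑ j, B i j * R j i := by
      simp [Matrix.trace, Matrix.mul_apply, Matrix.diag]
    rw [h1]
    refine Finset.sum_congr rfl fun i _ => Finset.sum_congr rfl fun j _ => ?_
    have := hR.1.apply i j
    rw [star_trivial] at this
    rw [this]
  have hγeq : γ = ∑ i, ∑ j, B i j * (G i * G j) := by
    rw [hγ]
    simp only [dotProduct, Matrix.mulVec, Finset.mul_sum]
    exact Finset.sum_congr rfl fun i _ => Finset.sum_congr rfl fun j _ => by ring
  have hQval : ∫ ω, Q ω ∂μ = γ + β := by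
    have h1 : Q = fun ω => ∑ i, ∑ j, B i j * ((G i + v ω i) * (G j + v ω j)) := by
      funext ω
      simp only [hQdef, hPdef, dotProduct, Matrix.mulVec, Pi.add_apply, Finset.mul_sum]
      exact Finset.sum_congr rfl fun i _ => Finset.sum_congr rfl fun j _ => by ring
    have hin : ∀ i j : Fin n, Integrable (fun ω => B i j * ((G i + v ω i) * (G j + v ω j))) μ :=
      fun i j => (myIntegrableMul (hGv i) (hGv j)).const_mul _
    rw [h1, integral_finset_sum _ fun i _ => integrable_finset_sum _ fun j _ => hin i j]
    have h2 : ∀ i : Fin n, ∫ ω, (∑ j, B i j * ((G i + v ω i) * (G j + v ω j))) ∂μ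
        = ∑ j, B i j * (G i * G j + R i j) := by
      intro i
      rw [integral_finset_sum _ fun j _ => hin i j]
      exact Finset.sum_congr rfl fun j _ => by rw [integral_const_mul, hprod i j]
    rw [Finset.sum_congr rfl fun i _ => h2 i]
    rw [hγeq, hβeq]
    rw [← Finset.sum_add_distrib]
    refine Finset.sum_congr rfl fun i _ => ?_
    rw [← Finset.sum_add_distrib]
    exact Finset.sum_congr rfl fun j _ => by ring
  have hTval : ∫ ω, (v ω ⬝ᵥ B.mulVec (v ω)) ∂μ = β := by
    have h1 : (fun ω => v ω ⬝ᵥ B.mulVec (v ω))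
        = fun ω => ∑ i, ∑ j, B i j * (v ω i * v ω j) := by
      funext ω
      simp only [dotProduct, Matrix.mulVec, Finset.mul_sum]
      exact Finset.sum_congr rfl fun i _ => Finset.sum_congr rfl fun j _ => by ring
    have hin : ∀ i j : Fin n, Integrable (fun ω => B i j * (v ω i * v ω j)) μ :=
      fun i j => (myIntegrableMul (hsq i) (hsq j)).const_mul _
    rw [h1, integral_finset_sum _ fun i _ => integrable_finset_sum _ fun j _ => hin i j]
    rw [hβeq]
    refine Finset.sum_congr rfl fun i _ => ?_
    rw [integral_finset_sum _ fun j _ => hin i j]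
    exact Finset.sum_congr rfl fun j _ => by rw [integral_const_mul, hcov i j]
  -- positivity facts
  have hγ0 : 0 < γ := by
    rw [hγ]
    simpa using (posDef_iff_dotProduct_mulVec.mp hB).2 hgx
  have hβ0 : 0 ≤ β := by
    rw [← hTval]
    refine integral_nonneg fun ω => ?_
    simpa using (posSemidef_iff_dotProduct_mulVec.mp hB.posSemidef).2 (v ω)
  have hc2 : c * (γ + β) < γ := (lt_div_iff₀ (by linarith)).mp hc1
  set δ := γ - c * (γ + β) with hδdef
  have hδ : 0 < δ := by rw [hδdef]; linarith
  set K := ∫ ω, N ω ∂μ with hKdef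
  have hK0 : 0 ≤ K := by
    rw [hKdef]
    exact integral_nonneg fun ω => Finset.sum_nonneg fun i _ => sq_nonneg _
  -- ancillary measurability
  have hPaesm : AEStronglyMeasurable P μ := by
    have h1 : P = fun ω => ∑ i, P ω i • (fun j => if i = j then (1:ℝ) else 0) := by
      funext ω; exact pi_eq_sum_univ (P ω)
    rw [h1]
    exact Finset.aestronglyMeasurable_fun_sum _ fun i _ =>
      ((hPm i).aestronglyMeasurable).smul_const _
  refine ⟨δ / (L * (K + 1)), by positivity, ?_⟩
  intro α hα0 hα1
  simp only [hPswap]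
  -- pointwise rewrites
  have hdot : ∀ ω, G ⬝ᵥ (α • (-(P ω))) = -(α * S ω) := by
    intro ω
    rw [hSdef]
    simp [dotProduct_smul, dotProduct_neg, smul_eq_mul]
  have hQneg : ∀ ω, (G + v ω) ⬝ᵥ (-(P ω)) = -(Q ω) := by
    intro ω
    rw [hQdef]
    simp [dotProduct_neg]
  have hnorm : ∀ ω, ‖α • (-(P ω))‖ ^ 2 ≤ α ^ 2 * N ω := by
    intro ω
    have h1 : ‖α • (-(P ω))‖ ^ 2 = α ^ 2 * ‖P ω‖ ^ 2 := by
      rw [norm_smul, norm_neg, mul_pow, Real.norm_eq_abs, sq_abs]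
    rw [h1, hNdef]
    exact mul_le_mul_of_nonneg_left (myNormSq (P ω)) (sq_nonneg α)
  -- the integrand and its majorant
  set Y : Ω → ℝ :=
    fun ω => -α * S ω + (L * α ^ 2) * N ω + e' ω - e ω + (c * α) * Q ω with hYdef
  have Y1 : Integrable (fun ω => -α * S ω) μ := hSint.const_mul _
  have Y2 : Integrable (fun ω => (L * α ^ 2) * N ω) μ := hNint.const_mul _
  have Y12 : Integrable (fun ω => -α * S ω + (L * α ^ 2) * N ω) μ := Y1.add Y2
  have Y123 : Integrable (fun ω => -α * S ω + (L * α ^ 2) * N ω + e' ω) μ := Y12.add he'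
  have Y1234 : Integrable (fun ω => -α * S ω + (L * α ^ 2) * N ω + e' ω - e ω) μ :=
    Y123.sub he
  have Y5 : Integrable (fun ω => (c * α) * Q ω) μ := hQint.const_mul _
  have hYint : Integrable Y μ := by
    rw [hYdef]
    exact Y1234.add Y5
  have hbr : Integrable
      (fun ω => f (x + α • (-(P ω))) - f x - G ⬝ᵥ (α • (-(P ω)))) μ := by
    refine Integrable.mono' (hNint.const_mul (L * α ^ 2)) ?_ ?_
    · have hc1 : Continuous fun u : Fin n → ℝ => x + α • (-u) :=
        continuous_const.add ((continuous_neg).const_smul α)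
      have h1 : AEStronglyMeasurable (fun ω => f (x + α • (-(P ω)))) μ :=
        hf.continuous.comp_aestronglyMeasurable (hc1.comp_aestronglyMeasurable hPaesm)
      have h2 : AEStronglyMeasurable (fun ω => G ⬝ᵥ (α • (-(P ω)))) μ := by
        have : (fun ω => G ⬝ᵥ (α • (-(P ω)))) = fun ω => -(α * S ω) := funext hdot
        rw [this]
        exact ((hSint.aestronglyMeasurable.const_mul α).neg)
      exact (h1.sub aestronglyMeasurable_const).sub h2
    · refine Filter.Eventually.of_forall fun ω => ?_
      rw [Real.norm_eq_abs]
      calc |f (x + α • (-(P ω))) - f x - G ⬝ᵥ (α • (-(P ω)))|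
          ≤ L * ‖α • (-(P ω))‖ ^ 2 := htaylor _
        _ ≤ L * (α ^ 2 * N ω) := mul_le_mul_of_nonneg_left (hnorm ω) hL.le
        _ = L * α ^ 2 * N ω := by ring
  have hIint : Integrable (fun ω =>
      (f (x + α • (-(P ω))) + e' ω) - (f x + e ω)
        - c * α * ((G + v ω) ⬝ᵥ (-(P ω)))) μ := by
    have hEq : (fun ω =>
        (f (x + α • (-(P ω))) + e' ω) - (f x + e ω)
          - c * α * ((G + v ω) ⬝ᵥ (-(P ω))))
        = fun ω => (f (x + α • (-(P ω))) - f x - G ⬝ᵥ (α • (-(P ω))))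
            + (-(α * S ω)) + e' ω - e ω + (c * α) * Q ω := by
      funext ω
      rw [hQneg ω, ← hdot ω]
      ring
    have j1 : Integrable (fun ω => -(α * S ω)) μ := (hSint.const_mul α).neg
    have j2 : Integrable (fun ω =>
        (f (x + α • (-(P ω))) - f x - G ⬝ᵥ (α • (-(P ω)))) + -(α * S ω)) μ := hbr.add j1
    have j3 : Integrable (fun ω =>
        (f (x + α • (-(P ω))) - f x - G ⬝ᵥ (α • (-(P ω)))) + -(α * S ω) + e' ω) μ :=
      j2.add he'
    have j4 : Integrable (fun ω =>
        (f (x + α • (-(P ω))) - f x - G ⬝ᵥ (α • (-(P ω)))) + -(α * S ω) + e' ω - e ω) μ :=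
      j3.sub he
    rw [hEq]
    exact j4.add Y5
  have hle : ∀ ω, (f (x + α • (-(P ω))) + e' ω) - (f x + e ω)
      - c * α * ((G + v ω) ⬝ᵥ (-(P ω))) ≤ Y ω := by
    intro ω
    have h1 := (abs_le.mp (htaylor (α • (-(P ω))))).2
    have h2 := mul_le_mul_of_nonneg_left (hnorm ω) hL.le
    rw [hdot ω] at h1
    rw [hQneg ω, hYdef]
    simp only
    nlinarith [h1, h2]
  calc ∫ ω, (f (x + α • (-(P ω))) + e' ω) - (f x + e ω)
        - c * α * ((G + v ω) ⬝ᵥ (-(P ω))) ∂μ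
      ≤ ∫ ω, Y ω ∂μ := integral_mono hIint hYint hle
    _ = -α * γ + (L * α ^ 2) * K + b - b + (c * α) * (γ + β) := by
        rw [hYdef]
        rw [integral_add Y1234 Y5, integral_sub Y123 he, integral_add Y12 he',
          integral_add Y1 Y2, integral_const_mul, integral_const_mul, integral_const_mul,
          hSval, hQval, hbe, hbe', ← hKdef]
    _ ≤ 0 := by
        have hα2 : α * (L * (K + 1)) ≤ δ := (le_div_iff₀ (by positivity)).mp hα1
        nlinarith [mul_le_mul_of_nonneg_left hα2 hα0.le,
          mul_nonneg (mul_nonneg hL.le hα0.le) hα0.le, hδ]
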